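/- Let n be a positive integer represented by the form x² + 2y² + 4z². Then there exist representations n = x₁² + 2y₁² + 4z₁² with z₁ odd and n = x₂² + 2y₂² + 4z₂² with z₂ even if and only if n ≡ 4 (mod 8), or n ≡ 6 (mod 16), or n ≡ 8 (mod 32), or n ≡ 16 (mod 32). -/
import Mathlib

set_option maxHeartbeats 1000000

/-- Square residues mod 8, keyed to the parity of `a`. -/
lemma sq8 (a : ℤ) : ∃ t r, a ^ 2 = 8 * t + r ∧
    ((a % 2 = 0 ∧ (r = 0 ∨ r = 4)) ∨ (a % 2 = 1 ∧ r = 1)) := by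
  obtain ⟨q, r0, hr0, hr1, rfl⟩ : ∃ q r0, 0 ≤ r0 ∧ r0 < 4 ∧ a = 4 * q + r0 :=
    ⟨a / 4, a % 4, by omega, by omega, by omega⟩
  interval_cases r0
  · exact ⟨2*q^2, 0, by ring, by omega⟩
  · exact ⟨2*q^2 + q, 1, by ring, by omega⟩
  · exact ⟨2*q^2 + 2*q, 4, by ring, by omega⟩
  · exact ⟨2*q^2 + 3*q + 1, 1, by ring, by omega⟩

/-- Square residues mod 16, keyed to the parity of `a`. -/
lemma sq16 (a : ℤ) : ∃ t r, a ^ 2 = 16 * t + r ∧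
    ((a % 2 = 0 ∧ (r = 0 ∨ r = 4)) ∨ (a % 2 = 1 ∧ (r = 1 ∨ r = 9))) := by
  obtain ⟨q, r0, hr0, hr1, rfl⟩ : ∃ q r0, 0 ≤ r0 ∧ r0 < 8 ∧ a = 8 * q + r0 :=
    ⟨a / 8, a % 8, by omega, by omega, by omega⟩
  interval_cases r0
  · exact ⟨4*q^2, 0, by ring, by omega⟩
  · exact ⟨4*q^2 + q, 1, by ring, by omega⟩
  · exact ⟨4*q^2 + 2*q, 4, by ring, by omega⟩
  · exact ⟨4*q^2 + 3*q, 9, by ring, by omega⟩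
  · exact ⟨4*q^2 + 4*q + 1, 0, by ring, by omega⟩
  · exact ⟨4*q^2 + 5*q + 1, 9, by ring, by omega⟩
  · exact ⟨4*q^2 + 6*q + 2, 4, by ring, by omega⟩
  · exact ⟨4*q^2 + 7*q + 3, 1, by ring, by omega⟩

/-- Square residues mod 32, keyed to the parity of `a`. -/
lemma sq32 (a : ℤ) : ∃ t r, a ^ 2 = 32 * t + r ∧
    ((a % 2 = 0 ∧ (r = 0 ∨ r = 4 ∨ r = 16)) ∨
     (a % 2 = 1 ∧ (r = 1 ∨ r = 9 ∨ r = 17 ∨ r = 25))) := by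
  obtain ⟨q, r0, hr0, hr1, rfl⟩ : ∃ q r0, 0 ≤ r0 ∧ r0 < 16 ∧ a = 16 * q + r0 :=
    ⟨a / 16, a % 16, by omega, by omega, by omega⟩
  interval_cases r0
  · exact ⟨8*q^2, 0, by ring, by omega⟩
  · exact ⟨8*q^2 + q, 1, by ring, by omega⟩
  · exact ⟨8*q^2 + 2*q, 4, by ring, by omega⟩
  · exact ⟨8*q^2 + 3*q, 9, by ring, by omega⟩
  · exact ⟨8*q^2 + 4*q, 16, by ring, by omega⟩
  · exact ⟨8*q^2 + 5*q, 25, by ring, by omega⟩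
  · exact ⟨8*q^2 + 6*q + 1, 4, by ring, by omega⟩
  · exact ⟨8*q^2 + 7*q + 1, 17, by ring, by omega⟩
  · exact ⟨8*q^2 + 8*q + 2, 0, by ring, by omega⟩
  · exact ⟨8*q^2 + 9*q + 2, 17, by ring, by omega⟩
  · exact ⟨8*q^2 + 10*q + 3, 4, by ring, by omega⟩
  · exact ⟨8*q^2 + 11*q + 3, 25, by ring, by omega⟩
  · exact ⟨8*q^2 + 12*q + 4, 16, by ring, by omega⟩
  · exact ⟨8*q^2 + 13*q + 5, 9, by ring, by omega⟩
  · exact ⟨8*q^2 + 14*q + 6, 4, by ring, by omega⟩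
  · exact ⟨8*q^2 + 15*q + 7, 1, by ring, by omega⟩

/-- Excluded residues of `n` whenever `z` is odd. -/
lemma repOdd (n x y z : ℤ) (h : x ^ 2 + 2 * y ^ 2 + 4 * z ^ 2 = n) (hz : z % 2 = 1) :
    ¬(n % 8 = 1 ∨ n % 8 = 3 ∨ n % 16 = 2 ∨ n % 16 = 14 ∨ n % 32 = 0 ∨ n % 32 = 24) := by
  obtain ⟨t1, r1, e1, p1⟩ := sq32 x
  obtain ⟨t2, r2, e2, p2⟩ := sq16 y
  obtain ⟨t3, r3, e3, p3⟩ := sq8 z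
  rw [e1, e2, e3] at h
  omega

/-- Excluded residues of `n` whenever `z` is even. -/
lemma repEven (n x y z : ℤ) (h : x ^ 2 + 2 * y ^ 2 + 4 * z ^ 2 = n) (hz : z % 2 = 0) :
    ¬(n % 8 = 5 ∨ n % 8 = 7 ∨ n % 16 = 10 ∨ n % 16 = 14) := by
  obtain ⟨t1, r1, e1, p1⟩ := sq32 x
  obtain ⟨t2, r2, e2, p2⟩ := sq16 y
  obtain ⟨t3, r3, e3, p3⟩ := sq8 z
  rw [e1, e2, e3] at h
  omega

theorem stmt_4 (n : ℕ) (hn : 0 < n)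
    (hrep : ∃ x y z : ℤ, x ^ 2 + 2 * y ^ 2 + 4 * z ^ 2 = (n : ℤ)) :
    ((∃ x₁ y₁ z₁ : ℤ, x₁ ^ 2 + 2 * y₁ ^ 2 + 4 * z₁ ^ 2 = (n : ℤ) ∧ Odd z₁) ∧
      (∃ x₂ y₂ z₂ : ℤ, x₂ ^ 2 + 2 * y₂ ^ 2 + 4 * z₂ ^ 2 = (n : ℤ) ∧ Even z₂)) ↔
      (n % 8 = 4 ∨ n % 16 = 6 ∨ n % 32 = 8 ∨ n % 32 = 16) := by
  constructor
  · rintro ⟨⟨x₁, y₁, z₁, h₁, hz₁⟩, ⟨x₂, y₂, z₂, h₂, hz₂⟩⟩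
    rw [Int.odd_iff] at hz₁
    rw [Int.even_iff] at hz₂
    have H1 := repOdd _ _ _ _ h₁ hz₁
    have H2 := repEven _ _ _ _ h₂ hz₂
    omega
  · intro hC
    obtain ⟨x, y, z, h⟩ := hrep
    rcases hC with h4 | h6 | h8
    · -- n ≡ 4 mod 8
      obtain ⟨t1, r1, e1, p1⟩ := sq8 x
      obtain ⟨t2, r2, e2, p2⟩ := sq8 y
      obtain ⟨t3, r3, e3, p3⟩ := sq8 z
      have h' := h
      rw [e1, e2, e3] at h'
      have hxy : x % 2 = 0 ∧ y % 2 = 0 := by omega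
      obtain ⟨a, rfl⟩ : ∃ a, x = 2 * a := ⟨x / 2, by omega⟩
      obtain ⟨b, rfl⟩ : ∃ b, y = 2 * b := ⟨y / 2, by omega⟩
      have h2 : 4 * a ^ 2 + 8 * b ^ 2 + 4 * z ^ 2 = (n : ℤ) := by linear_combination h
      obtain ⟨ta, ra, ea, pa⟩ := sq8 a
      have h3 := h2
      rw [ea, e3] at h3
      have hpar : a % 2 + z % 2 = 1 := by omega
      rcases Int.emod_two_eq z with hz | hz
      · exact ⟨⟨2 * z, 2 * b, a, by linear_combination h, Int.odd_iff.mpr (by omega)⟩,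
          ⟨2 * a, 2 * b, z, h, Int.even_iff.mpr hz⟩⟩
      · exact ⟨⟨2 * a, 2 * b, z, h, Int.odd_iff.mpr hz⟩,
          ⟨2 * z, 2 * b, a, by linear_combination h, Int.even_iff.mpr (by omega)⟩⟩
    · -- n ≡ 6 mod 16
      obtain ⟨t2, r2, e2, p2⟩ := sq16 y
      obtain ⟨t3, r3, e3, p3⟩ := sq16 z
      have hx : x % 2 = 0 := by
        obtain ⟨t1, r1, e1, p1⟩ := sq8 x
        have h' := h
        rw [e1] at h'
        omega
      obtain ⟨a, rfl⟩ : ∃ a, x = 2 * a := ⟨x / 2, by omega⟩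
      have h2 : 4 * a ^ 2 + 2 * y ^ 2 + 4 * z ^ 2 = (n : ℤ) := by linear_combination h
      obtain ⟨ta, ra, ea, pa⟩ := sq16 a
      have h3 := h2
      rw [ea, e2, e3] at h3
      have hpar : a % 2 + z % 2 = 1 := by omega
      rcases Int.emod_two_eq z with hz | hz
      · exact ⟨⟨2 * z, y, a, by linear_combination h, Int.odd_iff.mpr (by omega)⟩,
          ⟨2 * a, y, z, h, Int.even_iff.mpr hz⟩⟩
      · exact ⟨⟨2 * a, y, z, h, Int.odd_iff.mpr hz⟩,
          ⟨2 * z, y, a, by linear_combination h, Int.even_iff.mpr (by omega)⟩⟩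
    · -- n ≡ 8 or 16 mod 32
      have hxy : x % 2 = 0 ∧ y % 2 = 0 := by
        obtain ⟨t1, r1, e1, p1⟩ := sq8 x
        obtain ⟨t2, r2, e2, p2⟩ := sq8 y
        obtain ⟨t3, r3, e3, p3⟩ := sq8 z
        have h' := h
        rw [e1, e2, e3] at h'
        omega
      obtain ⟨a, rfl⟩ : ∃ a, x = 2 * a := ⟨x / 2, by omega⟩
      obtain ⟨b, rfl⟩ : ∃ b, y = 2 * b := ⟨y / 2, by omega⟩
      have h2 : 4 * a ^ 2 + 8 * b ^ 2 + 4 * z ^ 2 = (n : ℤ) := by linear_combination h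
      have haz : a % 2 = z % 2 := by
        obtain ⟨ta, ra, ea, pa⟩ := sq8 a
        obtain ⟨tz, rz, ez, pz⟩ := sq8 z
        have h3 := h2
        rw [ea, ez] at h3
        omega
      rcases Int.emod_two_eq z with hz | hz
      · -- z even: construct an odd representation
        obtain ⟨α, rfl⟩ : ∃ α, a = 2 * α := ⟨a / 2, by omega⟩
        obtain ⟨ζ, rfl⟩ : ∃ ζ, z = 2 * ζ := ⟨z / 2, by omega⟩
        have h4 : 16 * α ^ 2 + 8 * b ^ 2 + 16 * ζ ^ 2 = (n : ℤ) := by linear_combination h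
        have hbu : (b + α + ζ) % 2 = 1 := by
          obtain ⟨tα, rα, eα, pα⟩ := sq8 α
          obtain ⟨tb, rb, eb, pb⟩ := sq8 b
          obtain ⟨tζ, rζ, eζ, pζ⟩ := sq8 ζ
          have h5 := h4
          rw [eα, eb, eζ] at h5
          omega
        exact ⟨⟨2 * (b + α + ζ), 2 * (α - ζ), b - α - ζ, by linear_combination h,
            Int.odd_iff.mpr (by omega)⟩,
          ⟨2 * (2 * α), 2 * b, 2 * ζ, h, Int.even_iff.mpr (by omega)⟩⟩
      · -- z odd: construct an even representation
        obtain ⟨s, t, rfl, rfl⟩ : ∃ s t, a = s + t ∧ z = s - t :=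
          ⟨(a + z) / 2, (a - z) / 2, by omega, by omega⟩
        by_cases hsb : s % 2 = b % 2
        · exact ⟨⟨2 * (s + t), 2 * b, s - t, h, Int.odd_iff.mpr hz⟩,
            ⟨2 * (s + b), 2 * t, s - b, by linear_combination h2,
              Int.even_iff.mpr (by omega)⟩⟩
        · exact ⟨⟨2 * (s + t), 2 * b, s - t, h, Int.odd_iff.mpr hz⟩,
            ⟨2 * (t + b), 2 * s, t - b, by linear_combination h2,
              Int.even_iff.mpr (by omega)⟩⟩
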